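/- Let Ψ be a highest weight vector of U(B₀) such that x_1^- is nilpotent of degree r in U(B₀)Ψ, i.e. (x_1^-)^{r+1}Ψ = 0 and (x_1^-)^r Ψ ≠ 0. Then for every 0 ≤ n ≤ r and every set of positive integers k_1,...,k_n, there exists a complex scalar A_{k_1,...,k_n} such that (x_1^-)^{r-n} x_{k_1}^- ··· x_{k_n}^- Ψ = A_{k_1,...,k_n} (x_1^-)^r Ψ. -/

import Mathlib

open scoped BigOperators

/-- A representation of the Borel subalgebra `U(B₀)` of the `sl₂` loop algebra:
operators `x_k^+, h_k` (`k ≥ 0`) and `x_k^-` (`k ≥ 1`, the value of `xm` at `0`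
being irrelevant) on a complex vector space, satisfying the loop relations. -/
structure BorelRep (V : Type*) [AddCommGroup V] [Module ℂ V] where
  xp : ℕ → Module.End ℂ V
  xm : ℕ → Module.End ℂ V
  h : ℕ → Module.End ℂ V
  h_xp : ∀ j k, ⁅h j, xp k⁆ = 2 • xp (j + k)
  h_xm : ∀ j k, 1 ≤ k → ⁅h j, xm k⁆ = -(2 • xm (j + k))
  xp_xm : ∀ j k, 1 ≤ k → ⁅xp j, xm k⁆ = h (j + k)
  h_h : ∀ j k, ⁅h j, h k⁆ = 0
  xp_xp : ∀ j k, ⁅xp j, xp k⁆ = 0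
  xm_xm : ∀ j k, 1 ≤ j → 1 ≤ k → ⁅xm j, xm k⁆ = 0

/-- The `k`-th elementary symmetric polynomial of `α_1, …, α_n`. -/
noncomputable def esymm {n : ℕ} (α : Fin n → ℂ) (k : ℕ) : ℂ :=
  ∑ s ∈ Finset.powersetCard k (Finset.univ : Finset (Fin n)), ∏ i ∈ s, α i

variable {V : Type*} [AddCommGroup V] [Module ℂ V]

/-- `x_m^+(α) = Σ_{k=0}^n (-1)^k e_k(α) x_{m-k}^+`. -/
noncomputable def xpP (B : BorelRep V) {n : ℕ} (α : Fin n → ℂ) (m : ℕ) :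
    Module.End ℂ V :=
  ∑ k ∈ Finset.range (n + 1), ((-1 : ℂ) ^ k * esymm α k) • B.xp (m - k)

/-- `x_m^-(α) = Σ_{k=0}^n (-1)^k e_k(α) x_{m-k}^-`. -/
noncomputable def xmP (B : BorelRep V) {n : ℕ} (α : Fin n → ℂ) (m : ℕ) :
    Module.End ℂ V :=
  ∑ k ∈ Finset.range (n + 1), ((-1 : ℂ) ^ k * esymm α k) • B.xm (m - k)

/-- `h_m(α) = Σ_{k=0}^n (-1)^k e_k(α) h_{m-k}`. -/
noncomputable def hP (B : BorelRep V) {n : ℕ} (α : Fin n → ℂ) (m : ℕ) :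
    Module.End ℂ V :=
  ∑ k ∈ Finset.range (n + 1), ((-1 : ℂ) ^ k * esymm α k) • B.h (m - k)

/-- The cyclic submodule `U(B₀)Ψ`: the span of all vectors obtained from `Ψ`
by words in the generators. -/
def cyclic (B : BorelRep V) (Ψ : V) : Submodule ℂ V :=
  Submodule.span ℂ {v | ∃ w : List (Module.End ℂ V),
    (∀ f ∈ w, (∃ k, f = B.xp k) ∨ (∃ k, 1 ≤ k ∧ f = B.xm k) ∨ (∃ k, f = B.h k)) ∧
    v = w.prod Ψ}

namespace Stmt6Aux

variable {V : Type*} [AddCommGroup V] [Module ℂ V] (B : BorelRep V) (Ψ : V)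

/-- applied word of lowering operators -/
def ww (L : List ℕ) : V := (L.map B.xm).prod Ψ

@[simp] lemma ww_nil : ww B Ψ [] = Ψ := rfl

@[simp] lemma ww_cons (a : ℕ) (L : List ℕ) : ww B Ψ (a :: L) = B.xm a (ww B Ψ L) := by
  simp [ww, Module.End.mul_apply]

lemma xm_comm {j k : ℕ} (hj : 1 ≤ j) (hk : 1 ≤ k) (u : V) :
    B.xm j (B.xm k u) = B.xm k (B.xm j u) := by
  have h0 := B.xm_xm j k hj hk
  rw [Ring.lie_def, sub_eq_zero] at h0
  have := congrArg (fun f : Module.End ℂ V => f u) h0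
  simpa [Module.End.mul_apply] using this

lemma h_xm_apply (j : ℕ) {k : ℕ} (hk : 1 ≤ k) (u : V) :
    B.h j (B.xm k u) = B.xm k (B.h j u) - (B.xm (j + k) u + B.xm (j + k) u) := by
  have h0 := B.h_xm j k hk
  rw [Ring.lie_def, sub_eq_iff_eq_add] at h0
  have h1 := congrArg (fun f : Module.End ℂ V => f u) h0
  simp only [Module.End.mul_apply, LinearMap.add_apply, LinearMap.neg_apply,
    LinearMap.smul_apply, two_smul] at h1
  rw [h1]; abel

lemma xp_xm_apply (j : ℕ) {k : ℕ} (hk : 1 ≤ k) (u : V) :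
    B.xp j (B.xm k u) = B.xm k (B.xp j u) + B.h (j + k) u := by
  have h0 := B.xp_xm j k hk
  rw [Ring.lie_def, sub_eq_iff_eq_add] at h0
  have h1 := congrArg (fun f : Module.End ℂ V => f u) h0
  simp only [Module.End.mul_apply, LinearMap.add_apply] at h1
  rw [h1]; abel

lemma ww_perm {L L' : List ℕ} (hp : L.Perm L') (hL : ∀ a ∈ L, 1 ≤ a) :
    ww B Ψ L = ww B Ψ L' := by
  unfold ww
  congr 1
  refine List.Perm.prod_eq' (hp.map _) ?_
  rw [List.pairwise_map]
  refine List.pairwise_of_forall_mem_list fun a ha b hb => ?_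
  refine LinearMap.ext fun u => ?_
  simpa [Module.End.mul_apply] using xm_comm B (hL a ha) (hL b hb) u


/-- span of words of length `m` with at most `c` entries `≥ 2` (all entries `≥ 1`) -/
def NN (m c : ℕ) : Submodule ℂ V :=
  Submodule.span ℂ {v | ∃ L : List ℕ, L.length = m ∧ (∀ a ∈ L, 1 ≤ a) ∧
    L.countP (fun a => decide (2 ≤ a)) ≤ c ∧ v = ww B Ψ L}

lemma ww_mem_NN {m c : ℕ} {L : List ℕ} (h1 : L.length = m) (h2 : ∀ a ∈ L, 1 ≤ a)
    (h3 : L.countP (fun a => decide (2 ≤ a)) ≤ c) : ww B Ψ L ∈ NN B Ψ m c :=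
  Submodule.subset_span ⟨L, h1, h2, h3, rfl⟩

lemma NN_mono {m c c' : ℕ} (h : c ≤ c') : NN B Ψ m c ≤ NN B Ψ m c' := by
  apply Submodule.span_le.2
  rintro v ⟨L, h1, h2, h3, rfl⟩
  exact ww_mem_NN B Ψ h1 h2 (h3.trans h)

lemma xm_mem_NN {m c : ℕ} {k : ℕ} (hk : 1 ≤ k) {v : V} (hv : v ∈ NN B Ψ m c) :
    B.xm k v ∈ NN B Ψ (m + 1) (c + 1) := by
  have : Submodule.map (B.xm k) (NN B Ψ m c) ≤ NN B Ψ (m + 1) (c + 1) := by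
    rw [NN, Submodule.map_span, Submodule.span_le]
    rintro _ ⟨_, ⟨L, h1, h2, h3, rfl⟩, rfl⟩
    refine Submodule.subset_span ⟨k :: L, by simp [h1], ?_, ?_, (ww_cons B Ψ k L).symm⟩
    · intro a ha; rcases List.mem_cons.1 ha with h | h; · omega
      exact h2 a h
    · rw [List.countP_cons]; split <;> omega
  exact this ⟨v, hv, rfl⟩

lemma xm1_mem_NN {m c : ℕ} {v : V} (hv : v ∈ NN B Ψ m c) :
    B.xm 1 v ∈ NN B Ψ (m + 1) c := by
  have : Submodule.map (B.xm 1) (NN B Ψ m c) ≤ NN B Ψ (m + 1) c := by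
    rw [NN, Submodule.map_span, Submodule.span_le]
    rintro _ ⟨_, ⟨L, h1, h2, h3, rfl⟩, rfl⟩
    refine Submodule.subset_span ⟨1 :: L, by simp [h1], ?_, ?_, (ww_cons B Ψ 1 L).symm⟩
    · intro a ha; rcases List.mem_cons.1 ha with h | h; · omega
      exact h2 a h
    · rw [List.countP_cons]; simpa using h3
  exact this ⟨v, hv, rfl⟩

variable (d : ℕ → ℂ)

/-- action of `h j` on a word stays in controlled span -/
lemma h_ww_mem (hhΨ : ∀ k, B.h k Ψ = d k • Ψ) (j : ℕ) :
    ∀ L : List ℕ, (∀ a ∈ L, 1 ≤ a) →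
      B.h j (ww B Ψ L) ∈ NN B Ψ L.length (L.countP (fun a => decide (2 ≤ a)) + 1) := by
  intro L
  induction L with
  | nil => intro _; rw [ww_nil, hhΨ j]
           exact Submodule.smul_mem _ _ (ww_mem_NN B Ψ (L := []) rfl (by simp) (by simp))
  | cons a L ih =>
    intro hL
    have ha : 1 ≤ a := hL a List.mem_cons_self
    have hL' : ∀ b ∈ L, 1 ≤ b := fun b hb => hL b (List.mem_cons_of_mem a hb)
    rw [ww_cons, h_xm_apply B j ha]
    have hshift : B.xm (j + a) (ww B Ψ L) = ww B Ψ ((j + a) :: L) := (ww_cons B Ψ _ L).symm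
    have hmem2 : ww B Ψ ((j + a) :: L) ∈
        NN B Ψ (L.length + 1) (L.countP (fun a => decide (2 ≤ a)) + 1) := by
      refine ww_mem_NN B Ψ (by simp) ?_ ?_
      · intro b hb; rcases List.mem_cons.1 hb with h | h; · omega
        exact hL' b h
      · rw [List.countP_cons]; split <;> omega
    by_cases h2a : 2 ≤ a
    · have m1 : B.xm a (B.h j (ww B Ψ L)) ∈
          NN B Ψ (L.length + 1) (L.countP (fun a => decide (2 ≤ a)) + 2) :=
        xm_mem_NN B Ψ ha (ih hL')
      have hcnt : (a :: L).countP (fun a => decide (2 ≤ a)) =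
          L.countP (fun a => decide (2 ≤ a)) + 1 := by simp [List.countP_cons, h2a]
      rw [hshift, List.length_cons, hcnt]
      exact Submodule.sub_mem _ m1
        (Submodule.add_mem _ (NN_mono B Ψ (by omega) hmem2) (NN_mono B Ψ (by omega) hmem2))
    · have ha1 : a = 1 := by omega
      subst ha1
      have m1 : B.xm 1 (B.h j (ww B Ψ L)) ∈
          NN B Ψ (L.length + 1) (L.countP (fun a => decide (2 ≤ a)) + 1) :=
        xm1_mem_NN B Ψ (ih hL')
      have hcnt : (1 :: L).countP (fun a => decide (2 ≤ a)) =
          L.countP (fun a => decide (2 ≤ a)) := by simp [List.countP_cons]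
      rw [hshift, List.length_cons, hcnt]
      exact Submodule.sub_mem _ m1 (Submodule.add_mem _ hmem2 hmem2)


lemma pow_succ_apply (s : ℕ) : (B.xm 1 ^ (s + 1)) Ψ = B.xm 1 ((B.xm 1 ^ s) Ψ) := by
  rw [pow_succ']; simp [Module.End.mul_apply]

lemma ww_replicate (m : ℕ) : ww B Ψ (List.replicate m 1) = (B.xm 1 ^ m) Ψ := by
  induction m with
  | zero => simp [ww]
  | succ m ih => rw [List.replicate_succ, ww_cons, ih, pow_succ_apply]

lemma hpow (hhΨ : ∀ k, B.h k Ψ = d k • Ψ) (s j : ℕ) :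
    B.h j ((B.xm 1 ^ (s + 1)) Ψ) = d j • (B.xm 1 ^ (s + 1)) Ψ
      - (2 * (s + 1) : ℂ) • B.xm (j + 1) ((B.xm 1 ^ s) Ψ) := by
  induction s with
  | zero =>
    simp only [zero_add, pow_one, pow_zero, Module.End.one_apply, Nat.cast_zero]
    rw [h_xm_apply B j le_rfl, hhΨ j, map_smul]
    module
  | succ s ih =>
    have hc : B.xm 1 (B.xm (j + 1) ((B.xm 1 ^ s) Ψ)) = B.xm (j + 1) ((B.xm 1 ^ (s + 1)) Ψ) := by
      rw [xm_comm B le_rfl (by omega), ← pow_succ_apply]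
    have key : B.h j ((B.xm 1 ^ (s + 1 + 1)) Ψ)
        = B.xm 1 (B.h j ((B.xm 1 ^ (s + 1)) Ψ))
          - (B.xm (j + 1) ((B.xm 1 ^ (s + 1)) Ψ) + B.xm (j + 1) ((B.xm 1 ^ (s + 1)) Ψ)) := by
      rw [pow_succ_apply B Ψ (s + 1), h_xm_apply B j le_rfl]
    rw [key, ih, map_sub, map_smul, map_smul, ← pow_succ_apply B Ψ (s + 1), hc]
    push_cast
    module

lemma xppow1 (hxpΨ : ∀ k, B.xp k Ψ = 0) (hhΨ : ∀ k, B.h k Ψ = d k • Ψ) (j : ℕ) :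
    B.xp j ((B.xm 1 ^ 1) Ψ) = d (j + 1) • Ψ := by
  rw [pow_one, xp_xm_apply B j le_rfl, hxpΨ j, map_zero, zero_add, hhΨ]

lemma xppow (hxpΨ : ∀ k, B.xp k Ψ = 0) (hhΨ : ∀ k, B.h k Ψ = d k • Ψ) (s j : ℕ) :
    B.xp j ((B.xm 1 ^ (s + 2)) Ψ) = ((s + 2 : ℂ) * d (j + 1)) • (B.xm 1 ^ (s + 1)) Ψ
      - ((s + 2) * (s + 1) : ℂ) • B.xm (j + 2) ((B.xm 1 ^ s) Ψ) := by
  induction s with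
  | zero =>
    have key : B.xp j ((B.xm 1 ^ (0 + 2)) Ψ)
        = B.xm 1 (B.xp j ((B.xm 1 ^ 1) Ψ)) + B.h (j + 1) ((B.xm 1 ^ 1) Ψ) := by
      rw [show (0 + 2 : ℕ) = 1 + 1 from rfl, pow_succ_apply B Ψ 1, xp_xm_apply B j le_rfl]
    have hp := hpow B Ψ d hhΨ 0 (j + 1)
    rw [zero_add] at hp
    rw [key, xppow1 B Ψ d hxpΨ hhΨ j, hp, map_smul, pow_zero]
    simp only [Module.End.one_apply, zero_add, pow_one, Nat.cast_zero]
    have h12 : j + 1 + 1 = j + 2 := rfl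
    rw [h12]
    module
  | succ s ih =>
    have key : B.xp j ((B.xm 1 ^ (s + 1 + 2)) Ψ)
        = B.xm 1 (B.xp j ((B.xm 1 ^ (s + 2)) Ψ)) + B.h (j + 1) ((B.xm 1 ^ (s + 2)) Ψ) := by
      rw [show s + 1 + 2 = (s + 2) + 1 from rfl, pow_succ_apply B Ψ (s + 2),
        xp_xm_apply B j le_rfl]
    have hp := hpow B Ψ d hhΨ (s + 1) (j + 1)
    rw [show s + 1 + 1 = s + 2 from rfl] at hp
    have hc : B.xm 1 (B.xm (j + 2) ((B.xm 1 ^ s) Ψ)) = B.xm (j + 2) ((B.xm 1 ^ (s + 1)) Ψ) := by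
      rw [xm_comm B le_rfl (by omega), ← pow_succ_apply]
    have h12 : j + 1 + 1 = j + 2 := rfl
    rw [key, ih, hp, map_sub, map_smul, map_smul, ← pow_succ_apply B Ψ (s + 1), hc, h12]
    push_cast
    module


lemma NN_le {m m' c c' : ℕ} (hm : m = m') (hc : c ≤ c') : NN B Ψ m c ≤ NN B Ψ m' c' := by
  subst hm; exact NN_mono B Ψ hc

lemma xp_split (hxpΨ : ∀ k, B.xp k Ψ = 0) (hhΨ : ∀ k, B.h k Ψ = d k • Ψ) :
    ∀ (P : List ℕ), (∀ a ∈ P, 2 ≤ a) → ∀ (s j : ℕ),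
      ∃ u ∈ NN B Ψ (P.length + (s + 1)) P.length,
        B.xp j (ww B Ψ (P ++ List.replicate (s + 2) 1))
          = u - ((s + 2) * (s + 1) : ℂ) • ww B Ψ (P ++ (j + 2) :: List.replicate s 1) := by
  intro P
  induction P with
  | nil =>
    intro _ s j
    refine ⟨((s + 2 : ℂ) * d (j + 1)) • ww B Ψ (List.replicate (s + 1) 1), ?_, ?_⟩
    · exact Submodule.smul_mem _ _ (ww_mem_NN B Ψ (by simp) (by simp) (by simp))
    · simp only [List.nil_append]
      rw [ww_replicate, ww_replicate, ww_cons, ww_replicate]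
      exact xppow B Ψ d hxpΨ hhΨ s j
  | cons t T ih =>
    intro hP s j
    have ht : 2 ≤ t := hP t List.mem_cons_self
    have hT : ∀ a ∈ T, 2 ≤ a := fun a ha => hP a (List.mem_cons_of_mem t ha)
    obtain ⟨u, hu, heq⟩ := ih hT s j
    have hword : ∀ a ∈ T ++ List.replicate (s + 2) 1, 1 ≤ a := by
      intro a ha
      rcases List.mem_append.1 ha with h | h
      · have := hT a h; omega
      · have := List.eq_of_mem_replicate h; omega
    have hcnt : (T ++ List.replicate (s + 2) 1).countP (fun a => decide (2 ≤ a)) = T.length := by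
      rw [List.countP_append]
      have h1 : T.countP (fun a => decide (2 ≤ a)) = T.length :=
        List.countP_eq_length.2 fun a ha => by simpa using hT a ha
      have h2 : (List.replicate (s + 2) 1).countP (fun a => decide (2 ≤ a)) = 0 :=
        List.countP_eq_zero.2 fun a ha => by
          have := List.eq_of_mem_replicate ha; simp [this]
      omega
    have hmemh : B.h (j + t) (ww B Ψ (T ++ List.replicate (s + 2) 1)) ∈
        NN B Ψ ((t :: T).length + (s + 1)) (t :: T).length := by
      have := h_ww_mem B Ψ d hhΨ (j + t) _ hword
      rw [hcnt] at this
      refine NN_le B Ψ ?_ ?_ this <;> simp <;> omega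
    refine ⟨B.xm t u + B.h (j + t) (ww B Ψ (T ++ List.replicate (s + 2) 1)), ?_, ?_⟩
    · refine Submodule.add_mem _ ?_ hmemh
      have := xm_mem_NN B Ψ (k := t) (by omega) hu
      refine NN_le B Ψ ?_ ?_ this <;> simp <;> omega
    · have e1 : ww B Ψ ((t :: T) ++ List.replicate (s + 2) 1)
          = B.xm t (ww B Ψ (T ++ List.replicate (s + 2) 1)) := by
        rw [List.cons_append, ww_cons]
      have e2 : ww B Ψ ((t :: T) ++ (j + 2) :: List.replicate s 1)
          = B.xm t (ww B Ψ (T ++ (j + 2) :: List.replicate s 1)) := by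
        rw [List.cons_append, ww_cons]
      rw [e1, e2, xp_xm_apply B j (by omega : 1 ≤ t), heq, map_sub, map_smul]
      abel


lemma main (hxpΨ : ∀ k, B.xp k Ψ = 0) (hhΨ : ∀ k, B.h k Ψ = d k • Ψ)
    (r : ℕ) (hnil : ((B.xm 1) ^ (r + 1)) Ψ = 0) :
    ∀ n : ℕ, n ≤ r → NN B Ψ r n ≤ Submodule.span ℂ {((B.xm 1) ^ r) Ψ} := by
  intro n
  induction n with
  | zero =>
    intro _
    apply Submodule.span_le.2
    rintro v ⟨L, h1, h2, h3, rfl⟩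
    have hall : ∀ a ∈ L, a = 1 := by
      intro a ha
      have := List.countP_eq_zero.1 (Nat.le_zero.1 h3) a ha
      have := h2 a ha
      simp at *; omega
    have : L = List.replicate r 1 := List.eq_replicate_iff.2 ⟨h1, hall⟩
    rw [this, ww_replicate]
    exact Submodule.mem_span_singleton_self _
  | succ n ihn =>
    intro hn1
    have ih := ihn (by omega)
    apply Submodule.span_le.2
    rintro v ⟨L, h1, h2, h3, rfl⟩
    by_cases hc : L.countP (fun a => decide (2 ≤ a)) ≤ n
    · exact ih (ww_mem_NN B Ψ h1 h2 hc)
    have hcnt : L.countP (fun a => decide (2 ≤ a)) = n + 1 := by omega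
    set P := L.filter (fun a => decide (2 ≤ a)) with hPdef
    set Q := L.filter (fun a => !decide (2 ≤ a)) with hQdef
    have hPlen : P.length = n + 1 := by
      rw [hPdef, ← List.countP_eq_length_filter]; exact hcnt
    have fap : (P ++ Q).Perm L := List.filter_append_perm _ L
    have hQ1 : ∀ a ∈ Q, a = 1 := by
      intro a ha
      rw [hQdef] at ha
      have h4 := List.of_mem_filter ha
      have h5 := h2 a (List.mem_of_mem_filter ha)
      simp at h4; omega
    have hlenQ : Q.length = r - (n + 1) := by
      have := fap.length_eq
      rw [List.length_append, hPlen, h1] at this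
      omega
    set s₀ := r - (n + 1) with hs₀
    have hQrep : Q = List.replicate s₀ 1 := by
      rw [List.eq_replicate_iff]; exact ⟨by omega, hQ1⟩
    have hP2 : ∀ a ∈ P, 2 ≤ a := by
      intro a ha
      have := List.of_mem_filter ha; simpa using this
    obtain ⟨t, T, hPT⟩ : ∃ t T, P = t :: T := by
      cases hPc : P with
      | nil => rw [hPc] at hPlen; simp at hPlen
      | cons t T => exact ⟨t, T, rfl⟩
    rw [hPT] at fap hPlen hP2
    have ht : 2 ≤ t := hP2 t List.mem_cons_self
    have hT2 : ∀ a ∈ T, 2 ≤ a := fun a ha => hP2 a (List.mem_cons_of_mem t ha)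
    have hTlen : T.length = n := by simpa using hPlen
    have hT1 : ∀ a ∈ T, 1 ≤ a := fun a ha => by have := hT2 a ha; omega
    -- step A : the (r+1)-length word vanishes
    have hwordA : ∀ a ∈ T ++ List.replicate (s₀ + 2) 1, 1 ≤ a := by
      intro a ha
      rcases List.mem_append.1 ha with h | h
      · exact hT1 a h
      · have := List.eq_of_mem_replicate h; omega
    have hinner : ww B Ψ (T ++ List.replicate (s₀ + 1) 1) ∈
        Submodule.span ℂ {((B.xm 1) ^ r) Ψ} := by
      apply ih
      refine ww_mem_NN B Ψ ?_ ?_ ?_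
      · simp; omega
      · intro a ha
        rcases List.mem_append.1 ha with h | h
        · exact hT1 a h
        · have := List.eq_of_mem_replicate h; omega
      · rw [List.countP_append]
        have h1' : T.countP (fun a => decide (2 ≤ a)) ≤ T.length := List.countP_le_length
        have h2' : (List.replicate (s₀ + 1) 1).countP (fun a => decide (2 ≤ a)) = 0 :=
          List.countP_eq_zero.2 fun a ha => by
            have := List.eq_of_mem_replicate ha; simp [this]
        omega
    obtain ⟨A, hA⟩ := Submodule.mem_span_singleton.1 hinner
    have hz : ww B Ψ (T ++ List.replicate (s₀ + 2) 1) = 0 := by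
      have hperm : (T ++ List.replicate (s₀ + 2) 1).Perm
          (1 :: (T ++ List.replicate (s₀ + 1) 1)) := by
        rw [List.replicate_succ]
        exact List.perm_middle
      rw [ww_perm B Ψ hperm hwordA, ww_cons, ← hA, map_smul, ← pow_succ_apply, hnil, smul_zero]
    -- step B : extract the target
    obtain ⟨u, hu, heq⟩ := xp_split B Ψ d hxpΨ hhΨ T hT2 s₀ (t - 2)
    rw [hz, map_zero] at heq
    have hc0 : ((s₀ + 2) * (s₀ + 1) : ℂ) ≠ 0 := by
      have : ((s₀ + 2) * (s₀ + 1) : ℕ) ≠ 0 := by positivity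
      exact_mod_cast this
    have htarget : ww B Ψ (T ++ (t - 2 + 2) :: List.replicate s₀ 1)
        = (((s₀ + 2) * (s₀ + 1) : ℂ))⁻¹ • u := by
      have := heq.symm
      rw [sub_eq_zero] at this
      rw [this, smul_smul, inv_mul_cancel₀ hc0, one_smul]
    have hu' : u ∈ Submodule.span ℂ {((B.xm 1) ^ r) Ψ} := by
      apply ih
      refine NN_le B Ψ ?_ ?_ hu <;> omega
    have htt : t - 2 + 2 = t := by omega
    -- step C : identify with the original word
    have hperm2 : L.Perm (T ++ t :: List.replicate s₀ 1) := by
      refine (fap.symm).trans ?_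
      rw [hQrep, List.cons_append]
      exact List.perm_middle.symm
    rw [ww_perm B Ψ hperm2 h2, ← htt, htarget]
    exact Submodule.smul_mem _ _ hu'

end Stmt6Aux

open Stmt6Aux in
/-- If `Ψ` is a highest weight vector of `U(B₀)` and `x_1^-` is nilpotent of
degree `r` on `U(B₀)Ψ`, then for every `n ≤ r` and positive integers
`k_1, …, k_n` there is a scalar `A` with
`(x_1^-)^{r-n} x_{k_1}^- ⋯ x_{k_n}^- Ψ = A (x_1^-)^r Ψ`. -/
theorem stmt6 (B : BorelRep V) (Ψ : V) (d : ℕ → ℂ)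
    (hxpΨ : ∀ k, B.xp k Ψ = 0) (hhΨ : ∀ k, B.h k Ψ = d k • Ψ)
    (r : ℕ) (hnil : ((B.xm 1) ^ (r + 1)) Ψ = 0) (hnz : ((B.xm 1) ^ r) Ψ ≠ 0) :
    ∀ n : ℕ, n ≤ r → ∀ k : Fin n → ℕ, (∀ i, 1 ≤ k i) →
      ∃ A : ℂ, ((B.xm 1) ^ (r - n)) (((List.ofFn fun i => B.xm (k i)).prod) Ψ)
        = A • ((B.xm 1) ^ r) Ψ := by
  intro n hn k hk
  have hclaim : ((B.xm 1) ^ (r - n)) (((List.ofFn fun i => B.xm (k i)).prod) Ψ)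
      = ww B Ψ (List.replicate (r - n) 1 ++ List.ofFn k) := by
    rw [ww, List.map_append, List.prod_append, List.map_replicate, List.prod_replicate,
      List.map_ofFn, Module.End.mul_apply]
    rfl
  have hmem : ww B Ψ (List.replicate (r - n) 1 ++ List.ofFn k) ∈ NN B Ψ r n := by
    refine ww_mem_NN B Ψ ?_ ?_ ?_
    · simp; omega
    · intro a ha
      rcases List.mem_append.1 ha with h | h
      · have := List.eq_of_mem_replicate h; omega
      · obtain ⟨i, rfl⟩ := List.mem_ofFn.1 h
        exact hk i
    · rw [List.countP_append]
      have h1 : (List.replicate (r - n) 1).countP (fun a => decide (2 ≤ a)) = 0 :=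
        List.countP_eq_zero.2 fun a ha => by
          have := List.eq_of_mem_replicate ha; simp [this]
      have h2 : (List.ofFn k).countP (fun a => decide (2 ≤ a)) ≤ (List.ofFn k).length :=
        List.countP_le_length
      rw [List.length_ofFn] at h2
      omega
  have := main B Ψ d hxpΨ hhΨ r hnil n hn hmem
  obtain ⟨A, hA⟩ := Submodule.mem_span_singleton.1 this
  exact ⟨A, by rw [hclaim, ← hA]⟩
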